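/- Let X ⊆ ℝ² be a finite set in general position whose extreme points (points p ∈ X with p ∉ convexHull ℝ (X \ {p})) are a₁, …, aₙ (n ≥ 3), listed in clockwise circular order, i.e. sign(a_i, a_j, a_k) = −1 for all i < j < k. Let x ∈ X and let y ∈ X be a non-extreme point with y ≠ x. Then there is exactly one index i ∈ {1, …, n} (indices taken modulo n) such that x, a_i, a_{i+1} are pairwise distinct, y ∉ {x, a_i, a_{i+1}}, and y ∈ convexHull ℝ {x, a_i, a_{i+1}} (the carousel rule). -/

import Mathlib

open Set

/-- Orientation sign of a triple of points in the plane: the sign of the determinant of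
the matrix with columns `y - x` and `z - x`. -/
noncomputable def osign (x y z : Fin 2 → ℝ) : ℝ :=
  Real.sign ((y 0 - x 0) * (z 1 - x 1) - (y 1 - x 1) * (z 0 - x 0))

/-- A planar point set is in general position if no three distinct points are collinear. -/
def GenPos (X : Set (Fin 2 → ℝ)) : Prop :=
  ∀ x ∈ X, ∀ y ∈ X, ∀ z ∈ X, x ≠ y → y ≠ z → x ≠ z →
    ¬ Collinear ℝ ({x, y, z} : Set (Fin 2 → ℝ))

/-- A convex geometry on a finite set `J`: a closure operator satisfying the
anti-exchange axiom. -/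
structure ConvexGeometry (J : Type) [Fintype J] where
  cl : Set J → Set J
  extensive : ∀ A : Set J, A ⊆ cl A
  mono : ∀ A B : Set J, A ⊆ B → cl A ⊆ cl B
  idem : ∀ A : Set J, cl (cl A) = cl A
  antiExchange : ∀ A : Set J, cl A = A → ∀ x y : J, x ≠ y → x ∉ A → y ∉ A →
    x ∈ cl (A ∪ {y}) → y ∉ cl (A ∪ {x})

variable {J : Type} [Fintype J]

/-- A set is dependent if some element lies in the closure of the rest. -/
def ConvexGeometry.Dependent (G : ConvexGeometry J) (D : Set J) : Prop :=
  ∃ x ∈ D, x ∈ G.cl (D \ {x})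

/-- A circuit is an inclusion-minimal dependent set. -/
def ConvexGeometry.IsCircuit (G : ConvexGeometry J) (C : Set J) : Prop :=
  G.Dependent C ∧ ∀ D ⊆ C, G.Dependent D → D = C

/-- A convex 4-geometry: all circuits have exactly 4 elements. -/
def ConvexGeometry.Is4Geometry (G : ConvexGeometry J) : Prop :=
  ∀ C : Set J, G.IsCircuit C → C.ncard = 4

/-- `(T, a)` is a rooted triangle of `G` if `T ∪ {a}` is a circuit with root `a`. -/
def ConvexGeometry.RT (G : ConvexGeometry J) (T : Set J) (a : J) : Prop :=
  a ∉ T ∧ G.IsCircuit (insert a T) ∧ a ∈ G.cl T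

/-- A realization of a convex geometry in the plane. -/
def IsRealization (G : ConvexGeometry J) (f : J → (Fin 2 → ℝ)) : Prop :=
  Function.Injective f ∧ GenPos (Set.range f) ∧
    ∀ Y : Set J, f '' (G.cl Y) = convexHull ℝ (f '' Y) ∩ Set.range f

/-- `G.rest n` is the set `Jₙ` remaining after removing the first `n` layers. -/
def ConvexGeometry.rest (G : ConvexGeometry J) : ℕ → Set J
  | 0 => Set.univ
  | n + 1 => {x ∈ G.rest n | x ∈ G.cl (G.rest n \ {x})}

/-- The `n`-th layer: the extreme points of the restricted geometry on `G.rest n`. -/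
def ConvexGeometry.layer (G : ConvexGeometry J) (n : ℕ) : Set J :=
  {x ∈ G.rest n | x ∉ G.cl (G.rest n \ {x})}

/-- Cyclic successor on `Fin n`. -/
def cyclicSucc {n : ℕ} (i : Fin n) : Fin n := ⟨(i.val + 1) % n, Nat.mod_lt _ i.pos⟩

/-! ### Auxiliary determinant machinery -/

noncomputable def det3 (p q r : Fin 2 → ℝ) : ℝ :=
  (q 0 - p 0) * (r 1 - p 1) - (q 1 - p 1) * (r 0 - p 0)

lemma det3_rot (p q r : Fin 2 → ℝ) : det3 p q r = det3 q r p := by unfold det3; ring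
lemma det3_swap12 (p q r : Fin 2 → ℝ) : det3 p q r = - det3 q p r := by unfold det3; ring
lemma det3_swap23 (p q r : Fin 2 → ℝ) : det3 p q r = - det3 p r q := by unfold det3; ring
lemma det3_self12 (p r : Fin 2 → ℝ) : det3 p p r = 0 := by unfold det3; ring
lemma det3_self13 (p q : Fin 2 → ℝ) : det3 p q p = 0 := by unfold det3; ring
lemma det3_self23 (p q : Fin 2 → ℝ) : det3 p q q = 0 := by unfold det3; ring

lemma det3_bary (p q r z : Fin 2 → ℝ) :
    det3 z q r + det3 p z r + det3 p q z = det3 p q r := by unfold det3; ring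

lemma det3_cramer0 (p q r z : Fin 2 → ℝ) :
    det3 p q r * z 0 = det3 z q r * p 0 + det3 p z r * q 0 + det3 p q z * r 0 := by
  unfold det3; ring

lemma det3_cramer1 (p q r z : Fin 2 → ℝ) :
    det3 p q r * z 1 = det3 z q r * p 1 + det3 p z r * q 1 + det3 p q z * r 1 := by
  unfold det3; ring

lemma det3_quad (A B C D x y : Fin 2 → ℝ) :
    det3 B C D * det3 x A y - det3 A C D * det3 x B y + det3 A B D * det3 x C y
      - det3 A B C * det3 x D y = 0 := by unfold det3; ring

lemma det3_sum {ι : Type} (s : Finset ι) (w : ι → ℝ) (z : ι → (Fin 2 → ℝ))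
    (hw : ∑ i ∈ s, w i = 1) (A B : Fin 2 → ℝ) :
    det3 A B (∑ i ∈ s, w i • z i) = ∑ i ∈ s, w i * det3 A B (z i) := by
  have h0 : (∑ i ∈ s, w i • z i) 0 = ∑ i ∈ s, w i * z i 0 := by
    rw [Finset.sum_apply]; rfl
  have h1 : (∑ i ∈ s, w i • z i) 1 = ∑ i ∈ s, w i * z i 1 := by
    rw [Finset.sum_apply]; rfl
  have hrhs : ∑ i ∈ s, w i * det3 A B (z i)
      = (B 0 - A 0) * (∑ i ∈ s, w i * z i 1) - (B 1 - A 1) * (∑ i ∈ s, w i * z i 0)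
        - (∑ i ∈ s, w i) * ((B 0 - A 0) * A 1 - (B 1 - A 1) * A 0) := by
    rw [Finset.mul_sum, Finset.mul_sum, Finset.sum_mul, ← Finset.sum_sub_distrib,
      ← Finset.sum_sub_distrib]
    apply Finset.sum_congr rfl
    intro i _
    unfold det3; ring
  rw [hrhs, hw]
  unfold det3; rw [h0, h1]; ring

lemma det3_hull_nonpos {S : Set (Fin 2 → ℝ)} {z A B : Fin 2 → ℝ}
    (hz : z ∈ convexHull ℝ S) (h : ∀ p ∈ S, det3 A B p ≤ 0) : det3 A B z ≤ 0 := by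
  obtain ⟨ι, _, w, f, hw0, hw1, hf, hsum⟩ := mem_convexHull_iff_exists_fintype.1 hz
  rw [← hsum, det3_sum _ _ _ hw1]
  exact Finset.sum_nonpos fun i _ => mul_nonpos_of_nonneg_of_nonpos (hw0 i) (h _ (hf i))

set_option linter.unnecessarySeqFocus false in
lemma collinear_of_det3 {p q r : Fin 2 → ℝ} (h : det3 p q r = 0) :
    Collinear ℝ ({p, q, r} : Set (Fin 2 → ℝ)) := by
  by_cases hpq : q = p
  · subst hpq
    rw [Set.insert_comm, Set.insert_idem]
    exact collinear_pair ℝ _ _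
  · apply collinear_iff_of_mem (Set.mem_insert p ({q, r} : Set (Fin 2 → ℝ))) |>.2
    have key : ∃ t : ℝ, r = t • (q - p) + p := by
      unfold det3 at h
      by_cases h0 : q 0 - p 0 ≠ 0
      · refine ⟨(r 0 - p 0) / (q 0 - p 0), ?_⟩
        funext c
        have hc : c = 0 ∨ c = 1 := by omega
        rcases hc with rfl | rfl <;>
          simp only [Pi.add_apply, Pi.smul_apply, Pi.sub_apply, smul_eq_mul] <;>
          field_simp <;>
          nlinarith [h]
      · push_neg at h0
        have h1 : q 1 - p 1 ≠ 0 := by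
          intro h1
          apply hpq; funext c
          have hc : c = 0 ∨ c = 1 := by omega
          rcases hc with rfl | rfl <;> linarith
        refine ⟨(r 1 - p 1) / (q 1 - p 1), ?_⟩
        funext c
        have hc : c = 0 ∨ c = 1 := by omega
        rcases hc with rfl | rfl <;>
          simp only [Pi.add_apply, Pi.smul_apply, Pi.sub_apply, smul_eq_mul] <;>
          field_simp <;>
          nlinarith [h]
    refine ⟨q - p, ?_⟩
    intro z hz
    simp only [Set.mem_insert_iff, Set.mem_singleton_iff] at hz
    rcases hz with hz | hz | hz
    · exact ⟨0, by simp [hz]⟩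
    · exact ⟨1, by simp [hz, vadd_eq_add]⟩
    · obtain ⟨t, ht⟩ := key
      exact ⟨t, by rw [hz, ht]; simp [vadd_eq_add]⟩

lemma subset_convexHull_extreme {X : Set (Fin 2 → ℝ)} (hXfin : X.Finite) :
    X ⊆ convexHull ℝ {p ∈ X | p ∉ convexHull ℝ (X \ {p})} := by
  classical
  set E : Set (Fin 2 → ℝ) := (convexHull ℝ X).extremePoints ℝ with hE
  have hEX : E ⊆ X := extremePoints_convexHull_subset
  have hKM : closure (convexHull ℝ E) = convexHull ℝ X :=
    closure_convexHull_extremePoints (hXfin.isCompact_convexHull ℝ) (convex_convexHull ℝ X)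
  have hclosed : IsClosed (convexHull ℝ E) := ((hXfin.subset hEX).isClosed_convexHull ℝ)
  have hEhull : convexHull ℝ E = convexHull ℝ X := by rw [← hKM, hclosed.closure_eq]
  have hEsub : E ⊆ {p ∈ X | p ∉ convexHull ℝ (X \ {p})} := by
    intro e he
    refine ⟨hEX he, ?_⟩
    intro hcon
    have h1 : e ∈ (convexHull ℝ (X \ {e})).extremePoints ℝ :=
      inter_extremePoints_subset_extremePoints_of_subset
        (convexHull_mono Set.diff_subset) ⟨hcon, he⟩
    have h2 : e ∈ X \ {e} := extremePoints_convexHull_subset h1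
    exact h2.2 rfl
  intro z hz
  have : z ∈ convexHull ℝ X := subset_convexHull ℝ X hz
  rw [← hEhull] at this
  exact convexHull_mono hEsub this

lemma mem_triple_hull {p q r z : Fin 2 → ℝ} {α β γ : ℝ}
    (h1 : 0 ≤ α) (h2 : 0 ≤ β) (h3 : 0 ≤ γ) (hsum : α + β + γ = 1)
    (hz : z = α • p + β • q + γ • r) :
    z ∈ convexHull ℝ ({p, q, r} : Set (Fin 2 → ℝ)) := by
  apply mem_convexHull_of_exists_fintype (ι := Fin 3) ![α, β, γ] ![p, q, r]
  · intro i; fin_cases i <;> simpa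
  · simp [Fin.sum_univ_three]; linarith
  · intro i; fin_cases i <;> simp [Set.mem_insert_iff]
  · simp [Fin.sum_univ_three, hz]

lemma cyclicSucc_eq_add_one {n : ℕ} (hn : 3 ≤ n) (z : Fin n) :
    haveI : NeZero n := ⟨by omega⟩
    cyclicSucc z = z + 1 := by
  haveI : NeZero n := ⟨by omega⟩
  apply Fin.ext
  rw [Fin.add_def, Fin.val_one', Nat.mod_eq_of_lt (show 1 < n by omega)]; rfl

lemma cyclic_transition {n : ℕ} (hn : 3 ≤ n) (s : Fin n → ℝ)
    (Hneg : ∃ i, s i < 0) (Hpos : ∃ i, 0 < s i)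
    (Hz : ∀ i : Fin n, s (cyclicSucc i) = 0 → 0 < s i)
    (Halt : ∀ p q r t : Fin n, p < q → q < r → r < t →
      ¬ (s p * s q < 0 ∧ s q * s r < 0 ∧ s r * s t < 0)) :
    ∃! i : Fin n, s i < 0 ∧ 0 < s (cyclicSucc i) := by
  haveI : NeZero n := ⟨by omega⟩
  have hsucc : ∀ z : Fin n, cyclicSucc z = z + 1 := cyclicSucc_eq_add_one hn
  have hval : ∀ z : Fin n, (z + 1).val = (z.val + 1) % n := by
    intro z
    rw [Fin.val_add, Fin.val_one', Nat.mod_eq_of_lt (show 1 < n by omega)]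
  obtain ⟨i0, h0⟩ := Hneg
  obtain ⟨i1, h1⟩ := Hpos
  have hex : ∃ i, s i < 0 ∧ 0 < s (cyclicSucc i) := by
    classical
    set K : Finset (Fin n) := Finset.univ.filter (fun k => 0 < s (i0 + k)) with hK
    have hKne : K.Nonempty := ⟨i1 - i0, by simp [hK]; exact h1⟩
    set m : Fin n := K.min' hKne with hm
    have hmK : m ∈ K := K.min'_mem hKne
    have hmpos : 0 < s (i0 + m) := by simpa [hK] using hmK
    have hm0 : m ≠ 0 := by
      intro h; rw [h, add_zero] at hmpos; linarith
    have hmv : 1 ≤ m.val := by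
      rcases Nat.eq_zero_or_pos m.val with h | h
      · exact absurd (Fin.ext h) hm0
      · exact h
    set m' : Fin n := ⟨m.val - 1, by omega⟩ with hm'
    have hm'succ : m' + 1 = m := by
      apply Fin.ext; rw [hval]
      show (m.val - 1 + 1) % n = m.val
      rw [Nat.sub_add_cancel hmv, Nat.mod_eq_of_lt m.isLt]
    have hm'lt : m' < m := by
      rw [Fin.lt_def]; show m.val - 1 < m.val; omega
    have hm'notK : m' ∉ K := fun h => absurd (K.min'_le _ h) (not_le.mpr hm'lt)
    have hm'np : ¬ 0 < s (i0 + m') := by simpa [hK] using hm'notK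
    rcases lt_trichotomy (s (i0 + m')) 0 with hlt | heq | hgt
    · refine ⟨i0 + m', hlt, ?_⟩
      rw [hsucc, add_assoc, hm'succ]; exact hmpos
    · exfalso
      have hm'0 : m' ≠ 0 := by
        intro h; rw [h, add_zero] at heq; linarith
      have hm'v : 1 ≤ m'.val := by
        rcases Nat.eq_zero_or_pos m'.val with h | h
        · exact absurd (Fin.ext h) hm'0
        · exact h
      set m'' : Fin n := ⟨m'.val - 1, by omega⟩ with hm''
      have hm''succ : m'' + 1 = m' := by
        apply Fin.ext; rw [hval]
        show (m'.val - 1 + 1) % n = m'.val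
        rw [Nat.sub_add_cancel hm'v, Nat.mod_eq_of_lt m'.isLt]
      have hz := Hz (i0 + m'') (by rw [hsucc, add_assoc, hm''succ]; exact heq)
      have hm''K : m'' ∈ K := by simp [hK]; exact hz
      have hle : m ≤ m'' := K.min'_le _ hm''K
      rw [Fin.le_def] at hle
      have h2 : m.val ≤ m'.val - 1 := hle
      have h3 : m'.val < m.val := hm'lt
      omega
    · exact absurd hgt hm'np
  obtain ⟨i, hi⟩ := hex
  refine ⟨i, hi, ?_⟩
  have key : ∀ i j : Fin n, (s i < 0 ∧ 0 < s (cyclicSucc i)) →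
      (s j < 0 ∧ 0 < s (cyclicSucc j)) → i < j → False := by
    intro i j hij1 hij2 hij
    obtain ⟨hi1, hi2⟩ := hij1
    obtain ⟨hj1, hj2⟩ := hij2
    rw [hsucc] at hi2 hj2
    have hiv : i.val < j.val := hij
    have hjv : j.val < n := j.isLt
    have hi1v : (i + 1).val = i.val + 1 := by
      rw [hval]; exact Nat.mod_eq_of_lt (by omega)
    have hne1 : i + 1 ≠ j := by
      rintro rfl; linarith
    have hlt1 : i + 1 < j := by
      rw [Fin.lt_def, hi1v]
      rcases Nat.lt_or_ge (i.val + 1) j.val with h | h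
      · exact h
      · exfalso; exact hne1 (Fin.ext (by rw [hi1v]; omega))
    have hilt : i < i + 1 := by rw [Fin.lt_def, hi1v]; omega
    rcases Nat.lt_or_ge (j.val + 1) n with hc | hc
    · have hj1v : (j + 1).val = j.val + 1 := by
        rw [hval]; exact Nat.mod_eq_of_lt hc
      have hjlt : j < j + 1 := by rw [Fin.lt_def, hj1v]; omega
      exact Halt i (i+1) j (j+1) hilt hlt1 hjlt
        ⟨mul_neg_of_neg_of_pos hi1 hi2, mul_neg_of_pos_of_neg hi2 hj1,
         mul_neg_of_neg_of_pos hj1 hj2⟩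
    · have hj1v : (j + 1).val = 0 := by
        rw [hval]
        have : j.val + 1 = n := by omega
        simp [this]
      have hne2 : j + 1 ≠ i := by
        rintro h; rw [← h] at hi1; linarith
      have hlt2 : j + 1 < i := by
        rw [Fin.lt_def, hj1v]
        rcases Nat.eq_zero_or_pos i.val with h | h
        · exfalso; exact hne2 (Fin.ext (by rw [hj1v]; omega))
        · omega
      exact Halt (j+1) i (i+1) j hlt2 hilt hlt1
        ⟨mul_neg_of_pos_of_neg hj2 hi1, mul_neg_of_neg_of_pos hi1 hi2,
         mul_neg_of_pos_of_neg hi2 hj1⟩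
  intro j hj
  rcases lt_trichotomy j i with h | h | h
  · exact absurd (key j i hj hi h) not_false
  · exact h
  · exact absurd (key i j hi hj h) not_false
/-- carousel rule: Let `X ⊆ ℝ²` be finite, in general position, with
extreme points `a 0, …, a (n-1)` (`n ≥ 3`) listed in clockwise circular order. For any
`x ∈ X` and any non-extreme `y ∈ X` with `y ≠ x`, there is exactly one index `i`
(modulo `n`) with `x, a i, a (i+1)` pairwise distinct, `y ∉ {x, a i, a (i+1)}`, and
`y ∈ convexHull ℝ {x, a i, a (i+1)}`. -/
theorem carousel_rule (n : ℕ) (hn : 3 ≤ n) (X : Set (Fin 2 → ℝ)) (hXfin : X.Finite)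
    (hgp : GenPos X) (a : Fin n → (Fin 2 → ℝ)) (hinj : Function.Injective a)
    (hext : Set.range a = {p ∈ X | p ∉ convexHull ℝ (X \ {p})})
    (hcw : ∀ i j k : Fin n, i < j → j < k → osign (a i) (a j) (a k) = -1)
    (x : Fin 2 → ℝ) (hx : x ∈ X) (y : Fin 2 → ℝ) (hy : y ∈ X)
    (hyne : y ∉ Set.range a) (hyx : y ≠ x) :
    ∃! i : Fin n,
      x ≠ a i ∧ x ≠ a (cyclicSucc i) ∧ a i ≠ a (cyclicSucc i) ∧
      y ≠ x ∧ y ≠ a i ∧ y ≠ a (cyclicSucc i) ∧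
      y ∈ convexHull ℝ ({x, a i, a (cyclicSucc i)} : Set (Fin 2 → ℝ)) := by
  classical
  haveI : NeZero n := ⟨by omega⟩
  have hsucc : ∀ z : Fin n, cyclicSucc z = z + 1 := cyclicSucc_eq_add_one hn
  have hval : ∀ z : Fin n, (z + 1).val = (z.val + 1) % n := by
    intro z
    rw [Fin.val_add, Fin.val_one', Nat.mod_eq_of_lt (show 1 < n by omega)]
  have hranX : Set.range a ⊆ X := by
    rw [hext]; exact fun p hp => hp.1
  have haX : ∀ i, a i ∈ X := fun i => hranX ⟨i, rfl⟩
  have hXhull : X ⊆ convexHull ℝ (Set.range a) := by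
    have h := subset_convexHull_extreme hXfin
    rw [← hext] at h
    exact h
  have hcw' : ∀ i j k : Fin n, i < j → j < k → det3 (a i) (a j) (a k) < 0 := by
    intro i j k hij hjk
    have h := hcw i j k hij hjk
    have heq : osign (a i) (a j) (a k) = Real.sign (det3 (a i) (a j) (a k)) := rfl
    rw [heq] at h
    rcases lt_trichotomy (det3 (a i) (a j) (a k)) 0 with h' | h' | h'
    · exact h'
    · rw [h', Real.sign_zero] at h; norm_num at h
    · rw [Real.sign_of_pos h'] at h; norm_num at h
  have hne_succ : ∀ i : Fin n, i ≠ cyclicSucc i := by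
    intro i h
    rw [hsucc] at h
    have hv := congrArg Fin.val h
    rw [hval] at hv
    have hin := i.isLt
    rcases Nat.lt_or_ge (i.val + 1) n with hc | hc
    · rw [Nat.mod_eq_of_lt hc] at hv; omega
    · have : i.val + 1 = n := by omega
      rw [this, Nat.mod_self] at hv; omega
  -- all hull points are weakly clockwise of every directed edge
  have edge : ∀ i k : Fin n, det3 (a i) (a (cyclicSucc i)) (a k) ≤ 0 := by
    intro i k
    by_cases hk1 : k = i
    · rw [hk1]; exact le_of_eq (det3_self13 _ _)
    by_cases hk2 : k = cyclicSucc i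
    · rw [hk2]; exact le_of_eq (det3_self23 _ _)
    rcases Nat.lt_or_ge (i.val + 1) n with hc | hc
    · have hsi : (cyclicSucc i).val = i.val + 1 := by
        show (i.val + 1) % n = i.val + 1; exact Nat.mod_eq_of_lt hc
      rcases lt_trichotomy k.val i.val with h | h | h
      · have hlt := hcw' k i (cyclicSucc i) h (by rw [Fin.lt_def, hsi]; omega)
        have heq : det3 (a k) (a i) (a (cyclicSucc i))
            = det3 (a i) (a (cyclicSucc i)) (a k) := det3_rot _ _ _
        linarith
      · exact absurd (Fin.ext h) hk1
      · have hkne : k.val ≠ i.val + 1 := fun hh => hk2 (Fin.ext (by rw [hsi]; exact hh))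
        have hklt : (cyclicSucc i) < k := by rw [Fin.lt_def, hsi]; omega
        exact le_of_lt (hcw' i (cyclicSucc i) k (by rw [Fin.lt_def, hsi]; omega) hklt)
    · have hin := i.isLt
      have hieq : i.val + 1 = n := by omega
      have hsi : (cyclicSucc i).val = 0 := by
        show (i.val + 1) % n = 0; rw [hieq, Nat.mod_self]
      have h1 : 0 < k.val := by
        rcases Nat.eq_zero_or_pos k.val with h | h
        · exact absurd (Fin.ext (by rw [hsi]; exact h)) hk2
        · exact h
      have h2 : k.val < i.val := by
        have hne : k.val ≠ i.val := fun hh => hk1 (Fin.ext hh)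
        have := k.isLt
        omega
      have hlt := hcw' (cyclicSucc i) k i (by rw [Fin.lt_def, hsi]; omega)
        (by rw [Fin.lt_def]; omega)
      have heq : det3 (a i) (a (cyclicSucc i)) (a k)
          = det3 (a (cyclicSucc i)) (a k) (a i) := det3_rot _ _ _
      linarith
  have edge_pt : ∀ (i : Fin n) (z : Fin 2 → ℝ), z ∈ X →
      det3 (a i) (a (cyclicSucc i)) z ≤ 0 := by
    intro i z hz
    refine det3_hull_nonpos (hXhull hz) ?_
    rintro p ⟨k, rfl⟩
    exact edge i k
  have hDy : ∀ i : Fin n, det3 (a i) (a (cyclicSucc i)) y < 0 := by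
    intro i
    have hle := edge_pt i y hy
    have hne0 : det3 (a i) (a (cyclicSucc i)) y ≠ 0 := by
      intro h0
      exact hgp (a i) (haX i) (a (cyclicSucc i)) (haX _) y hy
        (hinj.ne (hne_succ i)) (fun h => hyne ⟨_, h⟩) (fun h => hyne ⟨i, h⟩)
        (collinear_of_det3 h0)
    exact lt_of_le_of_ne hle hne0
  set s : Fin n → ℝ := fun i => det3 x (a i) y with hs
  have hs_ne : ∀ i : Fin n, x ≠ a i → s i ≠ 0 := by
    intro i hxi h0
    exact hgp x hx (a i) (haX i) y hy hxi (fun h => hyne ⟨i, h⟩) (Ne.symm hyx)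
      (collinear_of_det3 h0)
  have hD' : ∀ i : Fin n, x ≠ a i → x ≠ a (cyclicSucc i) →
      det3 x (a i) (a (cyclicSucc i)) < 0 := by
    intro i h1 h2
    have hle := edge_pt i x hx
    have hne0 : det3 (a i) (a (cyclicSucc i)) x ≠ 0 := by
      intro h0
      exact hgp (a i) (haX i) (a (cyclicSucc i)) (haX _) x hx
        (hinj.ne (hne_succ i)) (Ne.symm h2) (Ne.symm h1) (collinear_of_det3 h0)
    have hlt := lt_of_le_of_ne hle hne0
    rw [det3_rot]; exact hlt
  -- the equivalence between triangle membership and the two sign conditions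
  have hEquiv : ∀ i : Fin n,
      (x ≠ a i ∧ x ≠ a (cyclicSucc i) ∧ a i ≠ a (cyclicSucc i) ∧
       y ≠ x ∧ y ≠ a i ∧ y ≠ a (cyclicSucc i) ∧
       y ∈ convexHull ℝ ({x, a i, a (cyclicSucc i)} : Set (Fin 2 → ℝ)))
      ↔ (s i < 0 ∧ 0 < s (cyclicSucc i)) := by
    intro i
    constructor
    · rintro ⟨hxi, hxsi, _, _, _, _, hmem⟩
      have hD := hD' i hxi hxsi
      have hsile : s i ≤ 0 := by
        refine det3_hull_nonpos hmem ?_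
        rintro p hp
        rcases hp with rfl | rfl | rfl
        · exact le_of_eq (det3_self13 _ _)
        · exact le_of_eq (det3_self23 _ _)
        · exact le_of_lt hD
      have hsilt : s i < 0 := lt_of_le_of_ne hsile (hs_ne i hxi)
      have hsige : det3 (a (cyclicSucc i)) x y ≤ 0 := by
        refine det3_hull_nonpos hmem ?_
        rintro p hp
        rcases hp with rfl | rfl | rfl
        · exact le_of_eq (det3_self23 _ _)
        · have heq : det3 (a (cyclicSucc i)) x (a i)
              = det3 x (a i) (a (cyclicSucc i)) := det3_rot _ _ _
          rw [heq]; exact le_of_lt hD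
        · exact le_of_eq (det3_self13 _ _)
      have hflip : s (cyclicSucc i) = - det3 (a (cyclicSucc i)) x y := by
        show det3 x (a (cyclicSucc i)) y = _
        rw [det3_swap12]
      have hge : 0 ≤ s (cyclicSucc i) := by rw [hflip]; linarith
      exact ⟨hsilt, lt_of_le_of_ne hge (Ne.symm (hs_ne _ hxsi))⟩
    · rintro ⟨hneg, hpos⟩
      have hxi : x ≠ a i := by
        intro h
        have : s i = 0 := by rw [hs]; simp only; rw [← h, det3_self12]
        linarith
      have hxsi : x ≠ a (cyclicSucc i) := by
        intro h
        have : s (cyclicSucc i) = 0 := by rw [hs]; simp only; rw [← h, det3_self12]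
        linarith
      have hD := hD' i hxi hxsi
      have hyi : y ≠ a i := fun h => hyne ⟨i, h.symm⟩
      have hysi : y ≠ a (cyclicSucc i) := fun h => hyne ⟨_, h.symm⟩
      refine ⟨hxi, hxsi, hinj.ne (hne_succ i), hyx, hyi, hysi, ?_⟩
      set pp := x with hpp
      set qq := a i with hqq
      set rr := a (cyclicSucc i) with hrr
      have hn1 : det3 y qq rr < 0 := by
        have heq : det3 y qq rr = det3 qq rr y := det3_rot _ _ _
        rw [heq]; exact hDy i
      have hn2 : det3 pp y rr < 0 := by
        have heq : det3 pp y rr = - det3 pp rr y := det3_swap23 _ _ _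
        rw [heq]
        have : det3 pp rr y = s (cyclicSucc i) := rfl
        rw [this]; linarith
      have hn3 : det3 pp qq y < 0 := hneg
      have hDlt : det3 pp qq rr < 0 := hD
      have hbar := det3_bary pp qq rr y
      set α := det3 y qq rr / det3 pp qq rr with hα
      set β := det3 pp y rr / det3 pp qq rr with hβ
      set γ := det3 pp qq y / det3 pp qq rr with hγ
      have hα0 : 0 ≤ α := le_of_lt (div_pos_of_neg_of_neg hn1 hDlt)
      have hβ0 : 0 ≤ β := le_of_lt (div_pos_of_neg_of_neg hn2 hDlt)
      have hγ0 : 0 ≤ γ := le_of_lt (div_pos_of_neg_of_neg hn3 hDlt)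
      have hsum : α + β + γ = 1 := by
        rw [hα, hβ, hγ, ← add_div, ← add_div, hbar,
          div_self (ne_of_lt hDlt)]
      have hcomb : y = α • pp + β • qq + γ • rr := by
        funext c
        have hc : c = 0 ∨ c = 1 := by omega
        have hD0 : det3 pp qq rr ≠ 0 := ne_of_lt hDlt
        rcases hc with rfl | rfl
        · have hcr := det3_cramer0 pp qq rr y
          show y 0 = α * pp 0 + β * qq 0 + γ * rr 0
          rw [hα, hβ, hγ]
          field_simp
          linarith
        · have hcr := det3_cramer1 pp qq rr y
          show y 1 = α * pp 1 + β * qq 1 + γ * rr 1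
          rw [hα, hβ, hγ]
          field_simp
          linarith
      exact mem_triple_hull hα0 hβ0 hγ0 hsum hcomb
  -- the alternation-free property
  have Halt : ∀ p q r t : Fin n, p < q → q < r → r < t →
      ¬ (s p * s q < 0 ∧ s q * s r < 0 ∧ s r * s t < 0) := by
    rintro p q r t h1 h2 h3 ⟨m1, m2, m3⟩
    have i1 := hcw' q r t h2 h3
    have i2 := hcw' p r t (h1.trans h2) h3
    have i3 := hcw' p q t h1 (h2.trans h3)
    have i4 := hcw' p q r h1 h2
    have iden := det3_quad (a p) (a q) (a r) (a t) x y
    have hsp : s p = det3 x (a p) y := rfl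
    have hsq : s q = det3 x (a q) y := rfl
    have hsr : s r = det3 x (a r) y := rfl
    have hst : s t = det3 x (a t) y := rfl
    rw [← hsp, ← hsq, ← hsr, ← hst] at iden
    rcases lt_trichotomy (s p) 0 with hp | hp | hp
    · have hq : 0 < s q := by
        rcases lt_trichotomy (s q) 0 with h | h | h
        · nlinarith
        · rw [h, mul_zero] at m1; linarith
        · exact h
      have hr : s r < 0 := by
        rcases lt_trichotomy (s r) 0 with h | h | h
        · exact h
        · rw [h, mul_zero] at m2; linarith
        · nlinarith
      have ht : 0 < s t := by
        rcases lt_trichotomy (s t) 0 with h | h | h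
        · nlinarith
        · rw [h, mul_zero] at m3; linarith
        · exact h
      nlinarith [mul_pos_of_neg_of_neg i1 hp, mul_neg_of_neg_of_pos i2 hq,
        mul_pos_of_neg_of_neg i3 hr, mul_neg_of_neg_of_pos i4 ht]
    · rw [hp, zero_mul] at m1; linarith
    · have hq : s q < 0 := by
        rcases lt_trichotomy (s q) 0 with h | h | h
        · exact h
        · rw [h, mul_zero] at m1; linarith
        · nlinarith
      have hr : 0 < s r := by
        rcases lt_trichotomy (s r) 0 with h | h | h
        · nlinarith
        · rw [h, mul_zero] at m2; linarith
        · exact h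
      have ht : s t < 0 := by
        rcases lt_trichotomy (s t) 0 with h | h | h
        · exact h
        · rw [h, mul_zero] at m3; linarith
        · nlinarith
      nlinarith [mul_neg_of_neg_of_pos i1 hp, mul_pos_of_neg_of_neg i2 hq,
        mul_neg_of_neg_of_pos i3 hr, mul_pos_of_neg_of_neg i4 ht]
  -- existence of positive and negative signs, and the zero condition
  have hHyp : (∃ i, s i < 0) ∧ (∃ i, 0 < s i) ∧
      (∀ i : Fin n, s (cyclicSucc i) = 0 → 0 < s i) := by
    by_cases hxr : x ∈ Set.range a
    · obtain ⟨j, hj⟩ := hxr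
      have hsneg : s (cyclicSucc j) < 0 := by
        show det3 x (a (cyclicSucc j)) y < 0
        rw [← hj]
        exact hDy j
      set pj : Fin n := j - 1 with hpjdef
      have hpj : cyclicSucc pj = j := by
        rw [hsucc, hpjdef, sub_add_cancel]
      have hspos : 0 < s pj := by
        have h1 : s pj = - det3 (a pj) x y := by
          show det3 x (a pj) y = _
          rw [det3_swap12]
        have h2 : det3 (a pj) (a (cyclicSucc pj)) y < 0 := hDy pj
        rw [hpj, hj] at h2
        rw [h1]; linarith
      refine ⟨⟨_, hsneg⟩, ⟨_, hspos⟩, ?_⟩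
      intro i hi
      by_cases hxi : x = a (cyclicSucc i)
      · have hji : cyclicSucc i = j := hinj (by rw [← hxi, hj])
        have : i = pj := by
          have h1 : i + 1 = j := by rw [← hsucc]; exact hji
          rw [hpjdef, ← h1]; exact (add_sub_cancel_right i 1).symm
        rw [this]; exact hspos
      · exact absurd hi (hs_ne _ hxi)
    · have hxna : ∀ i, x ≠ a i := fun i h => hxr ⟨i, h.symm⟩
      obtain ⟨ι, _, w, f, hw0, hw1, hf, hsumy⟩ :=
        mem_convexHull_iff_exists_fintype.1 (hXhull hy)
      have hzero : ∑ i, w i * det3 x (f i) y = 0 := by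
        have h1 : det3 x y (∑ i, w i • f i) = ∑ i, w i * det3 x y (f i) :=
          det3_sum Finset.univ w f hw1 x y
        rw [hsumy, det3_self23] at h1
        have h2 : ∑ i, w i * det3 x (f i) y = - ∑ i, w i * det3 x y (f i) := by
          rw [← Finset.sum_neg_distrib]
          apply Finset.sum_congr rfl
          intro i _
          rw [det3_swap23 x y (f i)]; ring
        rw [h2, ← h1]; norm_num
      have hwex : ∃ i, 0 < w i := by
        by_contra hno
        push_neg at hno
        have : ∀ i ∈ Finset.univ, w i = 0 := fun i _ => le_antisymm (hno i) (hw0 i)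
        rw [Finset.sum_congr rfl this, Finset.sum_const_zero] at hw1
        norm_num at hw1
      obtain ⟨iw, hiw⟩ := hwex
      have hfs : ∀ i : ι, ∃ k : Fin n, f i = a k := fun i => by
        obtain ⟨k, hk⟩ := hf i; exact ⟨k, hk.symm⟩
      have Hpos : ∃ k, 0 < s k := by
        by_contra hno
        push_neg at hno
        have hallneg : ∀ k, s k < 0 := fun k =>
          lt_of_le_of_ne (hno k) (hs_ne k (hxna k))
        have hterm : ∀ i ∈ Finset.univ, w i * det3 x (f i) y ≤ 0 := by
          intro i _
          obtain ⟨k, hk⟩ := hfs i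
          rw [hk]
          exact mul_nonpos_of_nonneg_of_nonpos (hw0 i) (le_of_lt (hallneg k))
        have hstrict : w iw * det3 x (f iw) y < 0 := by
          obtain ⟨k, hk⟩ := hfs iw
          rw [hk]
          exact mul_neg_of_pos_of_neg hiw (hallneg k)
        have hlt : ∑ i, w i * det3 x (f i) y < 0 := by
          calc ∑ i, w i * det3 x (f i) y
              < ∑ _i : ι, (0 : ℝ) := by
                apply Finset.sum_lt_sum hterm ⟨iw, Finset.mem_univ iw, hstrict⟩
            _ = 0 := by simp
        linarith [hzero]
      have Hneg : ∃ k, s k < 0 := by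
        by_contra hno
        push_neg at hno
        have hallpos : ∀ k, 0 < s k := fun k =>
          lt_of_le_of_ne (hno k) (Ne.symm (hs_ne k (hxna k)))
        have hterm : ∀ i ∈ Finset.univ, 0 ≤ w i * det3 x (f i) y := by
          intro i _
          obtain ⟨k, hk⟩ := hfs i
          rw [hk]
          exact mul_nonneg (hw0 i) (le_of_lt (hallpos k))
        have hstrict : 0 < w iw * det3 x (f iw) y := by
          obtain ⟨k, hk⟩ := hfs iw
          rw [hk]
          exact mul_pos hiw (hallpos k)
        have hlt : 0 < ∑ i, w i * det3 x (f i) y := by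
          calc (0 : ℝ) = ∑ _i : ι, (0 : ℝ) := by simp
            _ < ∑ i, w i * det3 x (f i) y :=
                Finset.sum_lt_sum hterm ⟨iw, Finset.mem_univ iw, hstrict⟩
        linarith [hzero]
      exact ⟨Hneg, Hpos, fun i hi => absurd hi (hs_ne _ (hxna _))⟩
  obtain ⟨Hneg, Hpos, Hz⟩ := hHyp
  obtain ⟨i, hi, huni⟩ := cyclic_transition hn s Hneg Hpos Hz Halt
  exact ⟨i, (hEquiv i).2 hi, fun j hj => huni j ((hEquiv j).1 hj)⟩
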